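/- Let λ be a partition of n with largest-square side length s = sq(λ). Then the sum of the hook lengths h_{i,j} over all cells (i,j) of λ with i ≤ s and j ≤ s equals s·n. -/

import Mathlib

/-- `l` represents a partition of `n` (0-indexed parts). -/
def IsPartitionFun (n : ℕ) (l : ℕ → ℕ) : Prop :=
  Antitone l ∧ (∀ i, n ≤ i → l i = 0) ∧ ∑ i ∈ Finset.range n, l i = n

/-- side of largest square in the Ferrers diagram: largest `j` with `λ_j ≥ j`. -/
def sqSide (n : ℕ) (l : ℕ → ℕ) : ℕ :=
  Nat.findGreatest (fun j => 0 < j ∧ j ≤ l (j - 1)) n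

/-- the conjugate partition (0-indexed): `λ'_j = #{i : λ_i ≥ j}` (here `j` 0-indexed). -/
def conjPart (n : ℕ) (l : ℕ → ℕ) (j : ℕ) : ℕ :=
  ((Finset.range n).filter fun i => j + 1 ≤ l i).card

/-- hook length of the (0-indexed) cell `(i,j)`:
`h_{i,j} = λ_i - j + λ'_j - i + 1` (with the paper's 1-indexing). -/
def hookLength (n : ℕ) (l : ℕ → ℕ) (i j : ℕ) : ℕ :=
  (l i - (j + 1)) + (conjPart n l j - (i + 1)) + 1

/-- the sum of hook lengths over the cells of the maximal `s × s`
square equals `s · n`. -/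
theorem stmt1 (n : ℕ) (l : ℕ → ℕ) (h : IsPartitionFun n l) :
    ∑ i ∈ Finset.range (sqSide n l), ∑ j ∈ Finset.range (sqSide n l), hookLength n l i j
      = sqSide n l * n := by
  obtain ⟨hanti, hzero, hsum⟩ := h
  set s := sqSide n l with hs
  have hsn : s ≤ n := Nat.findGreatest_le n
  -- l i ≥ s for i < s
  have hls : ∀ i < s, s ≤ l i := by
    intro i hi
    rcases Nat.eq_zero_or_pos s with h0 | h0
    · omega
    have hPs : 0 < s ∧ s ≤ l (s - 1) :=
      Nat.findGreatest_of_ne_zero (m := s) rfl (Nat.pos_iff_ne_zero.mp h0)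
    calc s ≤ l (s - 1) := hPs.2
      _ ≤ l i := hanti (by omega)
  -- l i ≤ s for i ≥ s
  have hlss : l s ≤ s := by
    rcases lt_or_ge s n with hlt | hge
    · have := Nat.findGreatest_is_greatest (P := fun j => 0 < j ∧ j ≤ l (j - 1))
        (n := n) (k := s + 1) (Nat.lt_succ_of_le (Nat.le_of_eq rfl)) (by omega)
      simp only [Nat.add_sub_cancel] at this
      omega
    · have : l s = 0 := hzero s (by omega)
      omega
  have hle : ∀ i, s ≤ i → l i ≤ s := fun i hi => le_trans (hanti hi) hlss
  -- conjPart ≥ s in the square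
  have hcs : ∀ j < s, s ≤ conjPart n l j := by
    intro j hj
    have hsub : Finset.range s ⊆ (Finset.range n).filter fun i => j + 1 ≤ l i := by
      intro i hi
      simp only [Finset.mem_range] at hi
      simp only [Finset.mem_filter, Finset.mem_range]
      exact ⟨by omega, by have := hls i hi; omega⟩
    calc s = (Finset.range s).card := (Finset.card_range s).symm
      _ ≤ _ := Finset.card_le_card hsub
  set A := ∑ i ∈ Finset.range s, l i with hA
  set B := ∑ j ∈ Finset.range s, conjPart n l j with hB
  set C := ∑ i ∈ Finset.Ico s n, l i with hC
  have hAC : A + C = n := by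
    have hsplit : ∑ i ∈ Finset.Ico 0 s, l i + ∑ i ∈ Finset.Ico s n, l i
        = ∑ i ∈ Finset.Ico 0 n, l i := Finset.sum_Ico_consecutive l (Nat.zero_le s) hsn
    simp only [← Finset.range_eq_Ico] at hsplit
    rw [hA, hC]
    omega
  -- B = s*s + C
  have hBval : B = s * s + C := by
    have hconj : ∀ j, conjPart n l j = ∑ i ∈ Finset.range n, if j + 1 ≤ l i then 1 else 0 := by
      intro j
      rw [conjPart, Finset.card_filter]
    calc B = ∑ j ∈ Finset.range s, ∑ i ∈ Finset.range n, if j + 1 ≤ l i then 1 else 0 := by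
            rw [hB]; exact Finset.sum_congr rfl fun j _ => hconj j
      _ = ∑ i ∈ Finset.range n, ∑ j ∈ Finset.range s, if j + 1 ≤ l i then 1 else 0 :=
            Finset.sum_comm
      _ = ∑ i ∈ Finset.range n, min s (l i) := by
            refine Finset.sum_congr rfl fun i _ => ?_
            have hf : (Finset.range s).filter (fun j => j + 1 ≤ l i) = Finset.range (min s (l i)) := by
              ext j; simp only [Finset.mem_filter, Finset.mem_range, lt_min_iff]; omega
            rw [← Finset.card_filter, hf, Finset.card_range]
      _ = ∑ i ∈ Finset.range s, min s (l i) + ∑ i ∈ Finset.Ico s n, min s (l i) := by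
            rw [Finset.range_eq_Ico, ← Finset.sum_Ico_consecutive _ (Nat.zero_le s) hsn,
              ← Finset.range_eq_Ico]
      _ = s * s + C := by
            congr 1
            · rw [Finset.sum_congr rfl fun i hi => ?_, Finset.sum_const, Finset.card_range,
                smul_eq_mul]
              have := hls i (Finset.mem_range.mp hi); omega
            · exact Finset.sum_congr rfl fun i hi => by
                have := hle i (Finset.mem_Ico.mp hi).1; omega
  set T := ∑ i ∈ Finset.range s, i with hT
  have hGauss : T * 2 + s = s * s := by
    have h2 := Finset.sum_range_id_mul_two s
    rw [← hT] at h2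
    rcases s with _ | m
    · simp [h2]
    · rw [h2]; simp [Nat.succ_sub_one]; ring
  -- main per-term rewrite
  have hkey : ∑ i ∈ Finset.range s, ∑ j ∈ Finset.range s, hookLength n l i j
      + ∑ i ∈ Finset.range s, ∑ j ∈ Finset.range s, (i + j + 2)
      = ∑ i ∈ Finset.range s, ∑ j ∈ Finset.range s, (l i + conjPart n l j + 1) := by
    rw [← Finset.sum_add_distrib]
    refine Finset.sum_congr rfl fun i hi => ?_
    rw [← Finset.sum_add_distrib]
    refine Finset.sum_congr rfl fun j hj => ?_
    have h1 := hls i (Finset.mem_range.mp hi)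
    have h2 := hcs j (Finset.mem_range.mp hj)
    have h3 : j + 1 ≤ l i := by have := Finset.mem_range.mp hj; omega
    have h4 : i + 1 ≤ conjPart n l j := by have := Finset.mem_range.mp hi; omega
    rw [hookLength]
    omega
  have hE : ∑ i ∈ Finset.range s, ∑ j ∈ Finset.range s, (i + j + 2)
      = 2 * (s * T) + 2 * (s * s) := by
    have h1 : ∀ i, ∑ j ∈ Finset.range s, (i + j + 2) = s * (i + 2) + T := by
      intro i
      rw [Finset.sum_add_distrib, Finset.sum_add_distrib, Finset.sum_const, Finset.sum_const,
        Finset.card_range, ← hT, smul_eq_mul, smul_eq_mul]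
      ring
    rw [Finset.sum_congr rfl fun i _ => h1 i, Finset.sum_add_distrib, Finset.sum_const,
      Finset.card_range, smul_eq_mul, ← Finset.mul_sum]
    have h2 : ∑ i ∈ Finset.range s, (i + 2) = T + 2 * s := by
      rw [Finset.sum_add_distrib, Finset.sum_const, Finset.card_range, ← hT, smul_eq_mul]
      ring
    rw [h2]
    ring
  have hR : ∑ i ∈ Finset.range s, ∑ j ∈ Finset.range s, (l i + conjPart n l j + 1)
      = s * A + s * B + s * s := by
    have h1 : ∀ i, ∑ j ∈ Finset.range s, (l i + conjPart n l j + 1) = s * (l i + 1) + B := by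
      intro i
      rw [Finset.sum_add_distrib, Finset.sum_add_distrib, Finset.sum_const, Finset.sum_const,
        Finset.card_range, ← hB, smul_eq_mul, smul_eq_mul]
      ring
    rw [Finset.sum_congr rfl fun i _ => h1 i, Finset.sum_add_distrib, Finset.sum_const,
      Finset.card_range, smul_eq_mul, ← Finset.mul_sum]
    have h2 : ∑ i ∈ Finset.range s, (l i + 1) = A + s := by
      rw [Finset.sum_add_distrib, Finset.sum_const, Finset.card_range, ← hA, smul_eq_mul]
      ring
    rw [h2, hA]
    ring
  rw [hE, hR] at hkey
  -- now pure arithmetic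
  have hsq : 2 * (s * T) + s * s = s * (s * s) := by
    calc 2 * (s * T) + s * s = s * (T * 2 + s) := by ring
      _ = s * (s * s) := by rw [hGauss]
  have hAB : s * A + s * B = s * n + s * (s * s) := by
    calc s * A + s * B = s * (A + B) := by ring
      _ = s * (n + s * s) := by rw [hBval]; congr 1; omega
      _ = s * n + s * (s * s) := by ring
  rw [hAB] at hkey
  omega
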